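/- Let A and B be Archimedean f-algebras with unit elements e_A and e_B respectively (and point separating order duals). If T : A → B is a Markov operator that is an extreme point of the convex set of Markov operators from A to B, then T(a²) = (T(a))² for every a ∈ A with a ≥ 0. -/

import Mathlib

section Aux
variable {A : Type*} [Ring A] [Lattice A] [Algebra ℝ A]
  [CovariantClass A A (· + ·) (· ≤ ·)]

omit [Algebra ℝ A] [CovariantClass A A (· + ·) (· ≤ ·)] in
lemma aux_disjoint_mul
    (hfA : ∀ x y z : A, 0 ≤ z → x ⊓ y = 0 → (x * z) ⊓ y = 0 ∧ (z * x) ⊓ y = 0)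
    {p q : A} (hpq : p ⊓ q = 0) : p * q = 0 ∧ q * p = 0 := by
  have hq : (0:A) ≤ q := by rw [← hpq]; exact inf_le_right
  have hp : (0:A) ≤ p := by rw [← hpq]; exact inf_le_left
  have h1 := (hfA p q q hq hpq).1
  have h2 := (hfA p q q hq hpq).2
  constructor
  · have h3 := (hfA q (p * q) p hp (by rw [inf_comm]; exact h1)).2
    rwa [inf_idem] at h3
  · have h3 := (hfA q (q * p) p hp (by rw [inf_comm]; exact h2)).1
    rwa [inf_idem] at h3

omit [Algebra ℝ A] in
lemma aux_one_nonneg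
    (hmulA : ∀ x y : A, 0 ≤ x → 0 ≤ y → 0 ≤ x * y)
    (hfA : ∀ x y z : A, 0 ≤ z → x ⊓ y = 0 → (x * z) ⊓ y = 0 ∧ (z * x) ⊓ y = 0) :
    (0:A) ≤ 1 := by
  have hd := aux_disjoint_mul hfA (posPart_inf_negPart_eq_zero (1:A))
  have h1 : ((1:A)⁻) * 1 = (1:A)⁻ * (1:A)⁺ - (1:A)⁻ * (1:A)⁻ := by
    rw [← mul_sub, posPart_sub_negPart]
  have h2 : (1:A)⁻ = - ((1:A)⁻ * (1:A)⁻) := by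
    rw [mul_one] at h1
    conv_lhs => rw [h1]
    rw [hd.2, zero_sub]
  have h3 : (1:A)⁻ ≤ 0 := by
    rw [h2, neg_nonpos]
    exact hmulA _ _ (negPart_nonneg 1) (negPart_nonneg 1)
  have h4 : (1:A)⁻ = 0 := le_antisymm h3 (negPart_nonneg 1)
  have h5 := posPart_sub_negPart (1:A)
  rw [h4, sub_zero] at h5
  rw [← h5]; exact posPart_nonneg 1

end Aux

section Key
variable {A B : Type*}
    [Ring A] [Lattice A] [Algebra ℝ A] [CovariantClass A A (· + ·) (· ≤ ·)]
    [Ring B] [Lattice B] [Algebra ℝ B] [CovariantClass B B (· + ·) (· ≤ ·)]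

set_option linter.unusedSectionVars false in
lemma aux_key
    (hmulA : ∀ x y : A, 0 ≤ x → 0 ≤ y → 0 ≤ x * y)
    (hmulB : ∀ x y : B, 0 ≤ x → 0 ≤ y → 0 ≤ x * y)
    (T : A →ₗ[ℝ] B)
    (hTpos : ∀ a : A, 0 ≤ a → 0 ≤ T a) (hT1 : T 1 = 1)
    (hext : T ∈ Set.extremePoints ℝ {S : A →ₗ[ℝ] B | (∀ a : A, 0 ≤ a → 0 ≤ S a) ∧ S 1 = 1})
    (c : A) (hc0 : 0 ≤ c) (hc1 : c ≤ 1) : ∀ x : A, T (c * x) = T c * T x := by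
  have hmono : ∀ x y : A, x ≤ y → T x ≤ T y := by
    intro x y hxy
    have := hTpos (y - x) (by simpa using sub_nonneg.mpr hxy)
    rw [map_sub, sub_nonneg] at this; exact this
  set R : A →ₗ[ℝ] B :=
    T.comp (LinearMap.mulLeft ℝ c) - (LinearMap.mulLeft ℝ (T c)).comp T with hRdef
  have hRx : ∀ x, R x = T (c * x) - T c * T x := fun x => rfl
  have hTc0 : 0 ≤ T c := hTpos c hc0
  have hTc1 : T c ≤ 1 := by rw [← hT1]; exact hmono c 1 hc1
  have hplus : (T + R) ∈ {S : A →ₗ[ℝ] B | (∀ a : A, 0 ≤ a → 0 ≤ S a) ∧ S 1 = 1} := by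
    constructor
    · intro x hx
      have h1 : 0 ≤ T (c * x) := hTpos _ (hmulA c x hc0 hx)
      have h2 : 0 ≤ (1 - T c) * T x := hmulB _ _ (sub_nonneg.mpr hTc1) (hTpos x hx)
      have h3 : (T + R) x = T (c * x) + (1 - T c) * T x := by
        simp only [LinearMap.add_apply, hRx, sub_mul, one_mul]
        abel
      rw [h3]; exact add_nonneg h1 h2
    · simp [hRx, hT1, mul_one]
  have hminus : (T - R) ∈ {S : A →ₗ[ℝ] B | (∀ a : A, 0 ≤ a → 0 ≤ S a) ∧ S 1 = 1} := by
    constructor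
    · intro x hx
      have h1 : 0 ≤ T ((1 - c) * x) := hTpos _ (hmulA _ x (sub_nonneg.mpr hc1) hx)
      have h2 : 0 ≤ T c * T x := hmulB _ _ hTc0 (hTpos x hx)
      have h3 : (T - R) x = T ((1 - c) * x) + T c * T x := by
        simp only [LinearMap.sub_apply, hRx, sub_mul, one_mul, map_sub]
        abel
      rw [h3]; exact add_nonneg h1 h2
    · simp [hRx, hT1, mul_one]
  have hseg : T ∈ openSegment ℝ (T + R) (T - R) := by
    refine ⟨1/2, 1/2, by norm_num, by norm_num, by norm_num, ?_⟩
    ext x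
    simp only [LinearMap.add_apply, LinearMap.sub_apply, LinearMap.smul_apply]
    module
  have hTR := (hext.2 hplus hminus hseg)
  have hR0 : R = 0 := by
    have := congrArg (· - T) hTR
    simpa using this
  intro x
  have := congrArg (fun S : A →ₗ[ℝ] B => S x) hR0
  simp only [hRx, LinearMap.zero_apply] at this
  exact sub_eq_zero.mp this

end Key

/-- If a Markov operator `T` between unital Archimedean `f`-algebras with point
separating order duals is an extreme point of the set of Markov operators, then
`T (a²) = (T a)²` for every `0 ≤ a`. -/
theorem stmt_13
    {A B : Type*}
    [Ring A] [Lattice A] [Algebra ℝ A] [CovariantClass A A (· + ·) (· ≤ ·)]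
    -- A is a Riesz space (vector lattice) over ℝ
    (hsmulA : ∀ (r : ℝ) (x : A), 0 ≤ r → 0 ≤ x → 0 ≤ r • x)
    -- A is a lattice-ordered algebra
    (hmulA : ∀ x y : A, 0 ≤ x → 0 ≤ y → 0 ≤ x * y)
    -- the f-algebra condition
    (hfA : ∀ x y z : A, 0 ≤ z → x ⊓ y = 0 → (x * z) ⊓ y = 0 ∧ (z * x) ⊓ y = 0)
    -- A is Archimedean
    (harchA : ∀ x y : A, (∀ n : ℕ, n • x ≤ y) → x ≤ 0)
    -- the order dual of A separates the points of A
    (hsepA : ∀ x : A, x ≠ 0 → ∃ f : A →ₗ[ℝ] ℝ, Monotone f ∧ f x ≠ 0)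
    [Ring B] [Lattice B] [Algebra ℝ B] [CovariantClass B B (· + ·) (· ≤ ·)]
    -- B is a Riesz space (vector lattice) over ℝ
    (hsmulB : ∀ (r : ℝ) (x : B), 0 ≤ r → 0 ≤ x → 0 ≤ r • x)
    -- B is a lattice-ordered algebra
    (hmulB : ∀ x y : B, 0 ≤ x → 0 ≤ y → 0 ≤ x * y)
    -- the f-algebra condition
    (hfB : ∀ x y z : B, 0 ≤ z → x ⊓ y = 0 → (x * z) ⊓ y = 0 ∧ (z * x) ⊓ y = 0)
    -- B is Archimedean
    (harchB : ∀ x y : B, (∀ n : ℕ, n • x ≤ y) → x ≤ 0)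
    -- the order dual of B separates the points of B
    (hsepB : ∀ x : B, x ≠ 0 → ∃ f : B →ₗ[ℝ] ℝ, Monotone f ∧ f x ≠ 0)
    (T : A →ₗ[ℝ] B)
    -- T is a Markov operator
    (hTpos : ∀ a : A, 0 ≤ a → 0 ≤ T a) (hT1 : T 1 = 1)
    (hext : T ∈ Set.extremePoints ℝ {S : A →ₗ[ℝ] B | (∀ a : A, 0 ≤ a → 0 ≤ S a) ∧ S 1 = 1}) :
    ∀ a : A, 0 ≤ a → T (a * a) = T a * T a := by
  intro a ha
  have hone : (0:A) ≤ 1 := aux_one_nonneg hmulA hfA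
  have hmono : ∀ x y : A, x ≤ y → T x ≤ T y := by
    intro x y hxy
    have := hTpos (y - x) (sub_nonneg.mpr hxy)
    rw [map_sub, sub_nonneg] at this; exact this
  have hsmono : ∀ (r : ℝ) (x y : B), 0 ≤ r → x ≤ y → r • x ≤ r • y := by
    intro r x y hr h
    have := hsmulB r (y - x) hr (sub_nonneg.mpr h)
    rwa [smul_sub, sub_nonneg] at this
  -- multiplicativity on truncations
  have keyn : ∀ n : ℕ,
      T ((a ⊓ (n:ℝ) • (1:A)) * (a ⊓ (n:ℝ) • (1:A)))
        = T (a ⊓ (n:ℝ) • (1:A)) * T (a ⊓ (n:ℝ) • (1:A)) := by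
    intro n
    cases n with
    | zero =>
      have h0 : a ⊓ ((0:ℕ):ℝ) • (1:A) = 0 := by
        simp [inf_of_le_right ha]
      rw [h0]; simp
    | succ m =>
      set r : ℝ := ((m+1 : ℕ) : ℝ) with hrdef
      have hr : (0:ℝ) < r := by positivity
      set an : A := a ⊓ r • (1:A) with handef
      have han0 : 0 ≤ an := le_inf ha (hsmulA r 1 hr.le hone)
      set c : A := r⁻¹ • an with hcdef
      have hc0 : 0 ≤ c := hsmulA r⁻¹ an (by positivity) han0
      have hc1 : c ≤ 1 := by
        have h1 : an ≤ r • (1:A) := inf_le_right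
        have h2 : r⁻¹ • an ≤ r⁻¹ • (r • (1:A)) := by
          have := hsmulA r⁻¹ (r • (1:A) - an) (by positivity) (sub_nonneg.mpr h1)
          rwa [smul_sub, sub_nonneg] at this
        rwa [smul_smul, inv_mul_cancel₀ hr.ne', one_smul] at h2
      have hk := aux_key hmulA hmulB T hTpos hT1 hext c hc0 hc1 an
      rw [hcdef, smul_mul_assoc, map_smul, map_smul, smul_mul_assoc] at hk
      exact smul_right_injective B (inv_ne_zero hr.ne') hk
  -- main estimate
  set b : B := T a with hbdef
  set s : B := T (a * a) with hsdef
  have hs0 : 0 ≤ s := hTpos _ (hmulA a a ha ha)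
  have hb0 : 0 ≤ b := hTpos a ha
  set d : B := s - b * b with hddef
  set C₁ : B := T (a * (a * a)) + T ((a * a) * a) with hC1def
  set C₂ : B := b * s + s * b with hC2def
  have main : ∀ n : ℕ, (n:ℝ) • d ≤ C₁ ∧ (n:ℝ) • (-d) ≤ C₂ := by
    intro n
    set r : ℝ := (n:ℝ) with hrdef
    have hr : (0:ℝ) ≤ r := Nat.cast_nonneg n
    set an : A := a ⊓ r • (1:A) with handef
    have han0 : 0 ≤ an := le_inf ha (hsmulA r 1 hr hone)
    have hana : an ≤ a := inf_le_left
    set p : A := a - an with hpdef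
    have hp0 : 0 ≤ p := sub_nonneg.mpr hana
    have hpa : p ≤ a := sub_le_self a han0
    set q : A := r • (1:A) - an with hqdef
    have hpq : p ⊓ q = 0 := by
      rw [hpdef, hqdef, handef, ← inf_sub, sub_self]
    have hd := aux_disjoint_mul hfA hpq
    -- a * p = p * p + r • p
    have hap : a * p = p * p + r • p := by
      have ha' : a = p + (r • (1:A) - q) := by rw [hpdef, hqdef]; abel
      calc a * p = (p + (r • (1:A) - q)) * p := by rw [← ha']
        _ = p * p + (r • (1:A)) * p - q * p := by noncomm_ring
        _ = p * p + r • p := by rw [hd.2, smul_mul_assoc, one_mul, sub_zero]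
    have hnp : r • p ≤ a * a := by
      have h1 : r • p ≤ a * p := by
        rw [hap]; exact le_add_of_nonneg_left (hmulA p p hp0 hp0)
      have h2 : a * p ≤ a * a := by
        have := hmulA a (a - p) ha (sub_nonneg.mpr hpa)
        rw [mul_sub, sub_nonneg] at this; exact this
      exact h1.trans h2
    have hsq : a * a - an * an = a * p + p * an := by
      rw [hpdef]; noncomm_ring
    have hposa : 0 ≤ a * a - an * an := by
      rw [hsq]; exact add_nonneg (hmulA a p ha hp0) (hmulA p an hp0 han0)
    have hA1 : r • (a * a - an * an) ≤ a * (a * a) + (a * a) * a := by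
      rw [hsq, smul_add]
      have h1 : r • (a * p) ≤ a * (a * a) := by
        rw [← mul_smul_comm]
        have := hmulA a (a * a - r • p) ha (sub_nonneg.mpr hnp)
        rw [mul_sub, sub_nonneg] at this; exact this
      have h2 : r • (p * an) ≤ (a * a) * a := by
        rw [← smul_mul_assoc]
        have h3 : (r • p) * an ≤ (a * a) * an := by
          have := hmulA (a * a - r • p) an (sub_nonneg.mpr hnp) han0
          rw [sub_mul, sub_nonneg] at this; exact this
        have h4 : (a * a) * an ≤ (a * a) * a := by
          have := hmulA (a * a) (a - an) (hmulA a a ha ha) hp0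
          rw [mul_sub, sub_nonneg] at this; exact this
        exact h3.trans h4
      exact add_le_add h1 h2
    -- B side
    set bn : B := T an with hbndef
    have hbn0 : 0 ≤ bn := hTpos an han0
    have hbnb : bn ≤ b := hmono an a hana
    have htp : b - bn = T p := by rw [hbdef, hbndef, hpdef, map_sub]
    have hw : T (r • p) ≤ s := hmono _ _ hnp
    have hw0 : 0 ≤ T (r • p) := hTpos _ (hsmulA r p hr hp0)
    have hBsq : b * b - bn * bn = b * (b - bn) + (b - bn) * bn := by noncomm_ring
    have hB0 : 0 ≤ b * b - bn * bn := by
      rw [hBsq]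
      exact add_nonneg (hmulB b _ hb0 (sub_nonneg.mpr hbnb))
        (hmulB _ bn (sub_nonneg.mpr hbnb) hbn0)
    have hB1 : r • (b * b - bn * bn) ≤ C₂ := by
      rw [hBsq, smul_add, hC2def]
      have h1 : r • (b * (b - bn)) ≤ b * s := by
        rw [← mul_smul_comm, htp, ← map_smul]
        have := hmulB b (s - T (r • p)) hb0 (sub_nonneg.mpr hw)
        rw [mul_sub, sub_nonneg] at this; exact this
      have h2 : r • ((b - bn) * bn) ≤ s * b := by
        rw [← smul_mul_assoc, htp, ← map_smul]
        have h3 : T (r • p) * bn ≤ s * bn := by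
          have := hmulB (s - T (r • p)) bn (sub_nonneg.mpr hw) hbn0
          rw [sub_mul, sub_nonneg] at this; exact this
        have h4 : s * bn ≤ s * b := by
          have := hmulB s (b - bn) hs0 (sub_nonneg.mpr hbnb)
          rw [mul_sub, sub_nonneg] at this; exact this
        exact h3.trans h4
      exact add_le_add h1 h2
    -- combine
    have hTan : T (an * an) = bn * bn := by rw [hbndef]; exact keyn n
    have hdeq : d = (s - T (an * an)) - (b * b - bn * bn) := by
      rw [hddef, hTan]; abel
    constructor
    · have h1 : d ≤ s - T (an * an) := by
        rw [hdeq]; exact sub_le_self _ hB0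
      have h2 : r • d ≤ r • (s - T (an * an)) := hsmono r _ _ hr h1
      have h3 : r • (s - T (an * an)) = T (r • (a * a - an * an)) := by
        rw [map_smul, map_sub, hsdef]
      have h4 : T (r • (a * a - an * an)) ≤ C₁ := by
        rw [hC1def, ← map_add]
        exact hmono _ _ hA1
      rw [h3] at h2
      exact h2.trans h4
    · have h0 : 0 ≤ s - T (an * an) := by
        have := hTpos _ hposa
        rw [map_sub] at this
        exact this
      have h1 : -d ≤ b * b - bn * bn := by
        rw [hdeq]; simp only [neg_sub]
        exact sub_le_self _ h0
      have h2 : r • (-d) ≤ r • (b * b - bn * bn) := hsmono r _ _ hr h1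
      exact h2.trans hB1
  have hd1 : d ≤ 0 := by
    apply harchB d C₁
    intro n
    rw [← Nat.cast_smul_eq_nsmul ℝ]
    exact (main n).1
  have hd2 : -d ≤ 0 := by
    apply harchB (-d) C₂
    intro n
    rw [← Nat.cast_smul_eq_nsmul ℝ]
    exact (main n).2
  have : d = 0 := le_antisymm hd1 (neg_nonpos.mp hd2)
  rw [hddef, sub_eq_zero] at this
  exact this
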